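/- For a finite-dimensional complex vector space V, a multidegree d = (d_1,…,d_s) with each d_i ≥ 1, and a tuple φ = (φ_1,…,φ_s) with φ_i ∈ Sym^{d_i} V, the subspace M(φ) := A(φ)^⊥ satisfies: for every subspace W ⊆ V, (φ_i ∈ Sym^{d_i} W for all i) if and only if M(φ) ⊆ W. -/

import Mathlib

open MvPolynomial Module

/-- The contraction action `ℓ ∘ φ = Σ_i ℓ_i ∂φ/∂X_i` of a linear form `ℓ ∈ V*` on `Sym V`. -/
noncomputable def contractL (n : ℕ) (ℓ : Fin (n + 1) → ℂ) :
    MvPolynomial (Fin (n + 1)) ℂ →ₗ[ℂ] MvPolynomial (Fin (n + 1)) ℂ :=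
  ∑ i, ℓ i • (pderiv i).toLinearMap

/-- Membership in `Sym^d W` for a subspace `W ⊆ V` of linear forms. -/
def symPowMem (n d : ℕ) (W : Submodule ℂ (MvPolynomial (Fin (n + 1)) ℂ))
    (φ : MvPolynomial (Fin (n + 1)) ℂ) : Prop :=
  φ ∈ Algebra.adjoin ℂ (W : Set (MvPolynomial (Fin (n + 1)) ℂ)) ∧ φ.IsHomogeneous d

/-- `A(φ) = {ℓ ∈ V* : ℓ ∘ φ = 0}`. -/
def Aphi (n : ℕ) (φ : MvPolynomial (Fin (n + 1)) ℂ) : Set (Fin (n + 1) → ℂ) :=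
  {ℓ | contractL n ℓ φ = 0}

/-- `M(φ) = A(φ)^⊥ ⊆ V`: the subspace of linear forms annihilated (under contraction) by
every element of `A(φ)`. -/
noncomputable def Mphi (n : ℕ) (φ : MvPolynomial (Fin (n + 1)) ℂ) :
    Submodule ℂ (MvPolynomial (Fin (n + 1)) ℂ) :=
  homogeneousSubmodule (Fin (n + 1)) ℂ 1 ⊓
    ⨅ ℓ ∈ Aphi n φ, LinearMap.ker (contractL n ℓ)

/-- `A(φ)` for a tuple `φ = (φ_1, …, φ_s)`: the linear forms apolar to every `φ_i`. -/
def AphiT (n s : ℕ) (φ : Fin s → MvPolynomial (Fin (n + 1)) ℂ) : Set (Fin (n + 1) → ℂ) :=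
  {ℓ | ∀ i, contractL n ℓ (φ i) = 0}

/-- `M(φ) = A(φ)^⊥ ⊆ V` for a tuple `φ`. -/
noncomputable def MphiT (n s : ℕ) (φ : Fin s → MvPolynomial (Fin (n + 1)) ℂ) :
    Submodule ℂ (MvPolynomial (Fin (n + 1)) ℂ) :=
  homogeneousSubmodule (Fin (n + 1)) ℂ 1 ⊓
    ⨅ ℓ ∈ AphiT n s φ, LinearMap.ker (contractL n ℓ)

/-- for a tuple `φ` of multidegree `d`, and every subspace `W ⊆ V`:
`φ_i ∈ Sym^{d_i} W` for all `i` iff `M(φ) ⊆ W`. -/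

noncomputable def Lmap (n : ℕ) : (Fin (n + 1) → ℂ) →ₗ[ℂ] MvPolynomial (Fin (n + 1)) ℂ :=
  ∑ j, (LinearMap.proj j).smulRight (X j)

lemma Lmap_apply (n : ℕ) (c : Fin (n + 1) → ℂ) : Lmap n c = ∑ j, C (c j) * X j := by
  simp [Lmap, LinearMap.sum_apply, smul_eq_C_mul]


lemma contractL_apply (n : ℕ) (ℓ : Fin (n + 1) → ℂ) (p : MvPolynomial (Fin (n + 1)) ℂ) :
    contractL n ℓ p = ∑ i, C (ℓ i) * pderiv i p := by
  simp [contractL, LinearMap.sum_apply, smul_eq_C_mul]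

lemma contractL_C (n : ℕ) (ℓ : Fin (n + 1) → ℂ) (a : ℂ) : contractL n ℓ (C a) = 0 := by
  simp [contractL_apply]

lemma contractL_X (n : ℕ) (ℓ : Fin (n + 1) → ℂ) (j : Fin (n + 1)) :
    contractL n ℓ (X j) = C (ℓ j) := by
  simp [contractL_apply, pderiv_X, Pi.single_apply]

lemma contractL_mul (n : ℕ) (ℓ : Fin (n + 1) → ℂ) (p q : MvPolynomial (Fin (n + 1)) ℂ) :
    contractL n ℓ (p * q) = p * contractL n ℓ q + q * contractL n ℓ p := by
  simp only [contractL_apply, pderiv_mul, Finset.mul_sum, mul_add, ← Finset.sum_add_distrib]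
  refine Finset.sum_congr rfl fun i _ => by ring

lemma contractL_Lmap (n : ℕ) (ℓ c : Fin (n + 1) → ℂ) :
    contractL n ℓ (Lmap n c) = C (∑ i, ℓ i * c i) := by
  rw [Lmap_apply, map_sum, map_sum]
  simp only [contractL_mul, contractL_C, contractL_X, mul_zero, zero_add]
  exact Finset.sum_congr rfl fun x _ => by rw [add_zero, ← C_mul, mul_comm]

lemma contractL_single (n : ℕ) (j : Fin (n + 1)) (p : MvPolynomial (Fin (n + 1)) ℂ) :
    contractL n (Pi.single j 1) p = pderiv j p := by
  rw [contractL_apply, Finset.sum_eq_single j] <;> simp +contextual [Pi.single_apply]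

lemma chainRule (n : ℕ) (f : Fin (n + 1) → MvPolynomial (Fin (n + 1)) ℂ) (k : Fin (n + 1))
    (p : MvPolynomial (Fin (n + 1)) ℂ) :
    pderiv k (aeval f p) = ∑ j, aeval f (pderiv j p) * pderiv k (f j) := by
  induction p using MvPolynomial.induction_on with
  | C a => simp
  | add p q hp hq =>
      simp only [map_add, ← aeval_def] at *
      rw [hp, hq, ← Finset.sum_add_distrib]
      exact Finset.sum_congr rfl fun j _ => (add_mul _ _ _).symm
  | mul_X p i hp =>
      simp only [map_mul, aeval_X, pderiv_mul, hp, pderiv_X]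
      have key : ∀ x : Fin (n+1),
          aeval f (pderiv x p * X i + p * Pi.single (M := fun _ => MvPolynomial (Fin (n+1)) ℂ) x 1 i) * pderiv k (f x)
          = aeval f (pderiv x p) * pderiv k (f x) * f i
            + (if x = i then aeval f p * pderiv k (f i) else 0) := by
        intro x
        rcases eq_or_ne x i with rfl | hxi
        · simp only [Pi.single_eq_same, mul_one, map_add, map_mul, aeval_X, if_pos rfl, if_true]
          ring
        · rw [Pi.single_eq_of_ne hxi.symm, if_neg hxi]
          simp only [mul_zero, add_zero, map_mul, aeval_X]
          ring
      rw [Finset.sum_congr rfl fun x _ => key x, Finset.sum_add_distrib,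
        Finset.sum_ite_eq' Finset.univ i, if_pos (Finset.mem_univ i), ← Finset.sum_mul]


lemma coeff_pderiv {n : ℕ} (p : MvPolynomial (Fin (n + 1)) ℂ) (i : Fin (n + 1)) (m : Fin (n + 1) →₀ ℕ) :
    coeff m (pderiv i p) = (m i + 1 : ℂ) * coeff (m + Finsupp.single i 1) p := by
  induction p using MvPolynomial.induction_on' with
  | add p q hp hq => simp [hp, hq, mul_add]
  | monomial s a =>
    rw [pderiv_monomial, coeff_monomial, coeff_monomial]
    by_cases h : s = m + Finsupp.single i 1
    · have h1 : s - Finsupp.single i 1 = m := by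
        subst h; ext j; simp [Finsupp.tsub_apply, Finsupp.single_apply]
      have h2 : s i = m i + 1 := by subst h; simp
      rw [if_pos h1, if_pos h, h2]
      push_cast; ring
    · rw [if_neg h, mul_zero]
      rcases Nat.eq_zero_or_pos (s i) with hs0 | hs0
      · by_cases hc : s - Finsupp.single i 1 = m
        · rw [if_pos hc, hs0]; simp
        · rw [if_neg hc]
      · have hc : s - Finsupp.single i 1 ≠ m := by
          intro hc
          apply h
          ext j
          have := DFunLike.congr_fun hc j
          rcases eq_or_ne j i with rfl | hij
          · simp only [Finsupp.tsub_apply, Finsupp.single_eq_same, Finsupp.add_apply] at this ⊢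
            omega
          · simp only [Finsupp.tsub_apply, Finsupp.single_eq_of_ne' (Ne.symm hij),
              Finsupp.add_apply] at this ⊢
            omega
        rw [if_neg hc]

lemma mem_vars_pderiv_ne {n : ℕ} {p : MvPolynomial (Fin (n + 1)) ℂ} {i : Fin (n + 1)}
    (h : i ∈ p.vars) : pderiv i p ≠ 0 := by
  rw [mem_vars] at h
  obtain ⟨d, hd, hid⟩ := h
  rw [Finsupp.mem_support_iff] at hid
  have hdp : coeff d p ≠ 0 := (MvPolynomial.mem_support_iff).mp hd
  have hsum : (d - Finsupp.single i 1) + Finsupp.single i 1 = d := by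
    ext j
    rcases eq_or_ne j i with rfl | hij
    · simp only [Finsupp.add_apply, Finsupp.tsub_apply, Finsupp.single_eq_same]
      omega
    · simp [Finsupp.tsub_apply, Finsupp.single_eq_of_ne' (Ne.symm hij)]
  intro h0
  have hcp := coeff_pderiv p i (d - Finsupp.single i 1)
  rw [h0, hsum] at hcp
  simp only [coeff_zero] at hcp
  rcases mul_eq_zero.mp hcp.symm with hcase | hcase
  · exact Nat.cast_add_one_ne_zero _ hcase
  · exact hdp hcase


lemma exists_single_of_degree_one {n : ℕ} (m : Fin (n + 1) →₀ ℕ)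
    (h : ∑ i ∈ m.support, m i = 1) : ∃ j, m = Finsupp.single j 1 := by
  have hne : m.support.Nonempty := by
    by_contra hh
    rw [Finset.not_nonempty_iff_eq_empty] at hh
    rw [hh] at h; simp at h
  obtain ⟨j, hj⟩ := hne
  have hj1 : 1 ≤ m j := by
    have := Finsupp.mem_support_iff.mp hj; omega
  refine ⟨j, ?_⟩
  ext k
  rcases eq_or_ne k j with rfl | hkj
  · have hle : m k ≤ ∑ i ∈ m.support, m i := Finset.single_le_sum (fun _ _ => Nat.zero_le _) hj
    simp only [Finsupp.single_eq_same]; omega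
  · simp only [Finsupp.single_eq_of_ne' (Ne.symm hkj)]
    by_contra hk
    have hkmem : k ∈ m.support := Finsupp.mem_support_iff.mpr hk
    have hsub : ({k, j} : Finset (Fin (n+1))) ⊆ m.support := by
      intro x hx; simp at hx; rcases hx with rfl | rfl <;> assumption
    have hle : ∑ i ∈ ({k, j} : Finset (Fin (n+1))), m i ≤ ∑ i ∈ m.support, m i :=
      Finset.sum_le_sum_of_subset hsub
    rw [Finset.sum_pair hkj] at hle
    omega

lemma Lmap_mem_homog (n : ℕ) (c : Fin (n + 1) → ℂ) :
    Lmap n c ∈ homogeneousSubmodule (Fin (n + 1)) ℂ 1 := by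
  rw [Lmap_apply]
  refine Submodule.sum_mem _ fun j _ => ?_
  rw [← smul_eq_C_mul]
  exact Submodule.smul_mem _ _ ((mem_homogeneousSubmodule 1 (X j)).mpr (isHomogeneous_X ℂ j))

lemma homog_one_eq_Lmap {n : ℕ} {p : MvPolynomial (Fin (n + 1)) ℂ} (hp : p.IsHomogeneous 1) :
    p = Lmap n (fun j => coeff (Finsupp.single j 1) p) := by
  rw [Lmap_apply]
  ext m
  rw [coeff_sum]
  simp only [coeff_C_mul, coeff_X']
  by_cases hm : ∃ j, m = Finsupp.single j 1
  · obtain ⟨j, rfl⟩ := hm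
    rw [Finset.sum_eq_single j]
    · simp
    · intro b _ hbj
      rw [if_neg fun hh => hbj ((Finsupp.single_left_inj one_ne_zero).mp hh), mul_zero]
    · simp
  · rw [Finset.sum_eq_zero, eq_comm]
    · by_contra hc
      have hw := hp (fun hh => hc hh.symm)
      have h1 : ∑ i ∈ m.support, m i = 1 := by
        have := Finsupp.degree_eq_weight_one (R := ℕ) (σ := Fin (n+1))
        rw [show Finsupp.weight (1 : Fin (n+1) → ℕ) m = Finsupp.degree m from (DFunLike.congr_fun this m).symm] at hw
        exact hw
      exact hm (exists_single_of_degree_one m h1)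
    · intro b _
      rw [if_neg, mul_zero]
      exact fun hh => hm ⟨b, hh.symm⟩


noncomputable def perp (n : ℕ) (U : Submodule ℂ (Fin (n + 1) → ℂ)) : Submodule ℂ (Fin (n + 1) → ℂ) where
  carrier := {c | ∀ u ∈ U, ∑ i, u i * c i = 0}
  add_mem' := by
    intro a b ha hb u hu
    simp only [Pi.add_apply, mul_add, Finset.sum_add_distrib, ha u hu, hb u hu, add_zero]
  zero_mem' := by intro u hu; simp
  smul_mem' := by
    intro r c hc u hu
    simp only [Pi.smul_apply, smul_eq_mul]
    rw [Finset.sum_congr rfl (fun i _ => by ring : ∀ i ∈ Finset.univ, u i * (r * c i) = r * (u i * c i)),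
      ← Finset.mul_sum, hc u hu, mul_zero]

lemma mem_perp {n : ℕ} {U : Submodule ℂ (Fin (n + 1) → ℂ)} {c : Fin (n + 1) → ℂ} :
    c ∈ perp n U ↔ ∀ u ∈ U, ∑ i, u i * c i = 0 := Iff.rfl

noncomputable def epsln (n : ℕ) : (Fin (n + 1) → ℂ) ≃ₗ[ℂ] Dual ℂ (Fin (n + 1) → ℂ) :=
  (Pi.basisFun ℂ (Fin (n + 1))).toDualEquiv

lemma epsln_apply (n : ℕ) (u x : Fin (n + 1) → ℂ) : epsln n u x = ∑ i, u i * x i := by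
  have hx : x = ∑ i, x i • (Pi.basisFun ℂ (Fin (n + 1))) i := by
    conv_lhs => rw [← Basis.sum_repr (Pi.basisFun ℂ (Fin (n + 1))) x]
    simp [Pi.basisFun_repr]
  conv_lhs => rw [hx]
  rw [map_sum]
  refine Finset.sum_congr rfl fun i _ => ?_
  rw [map_smul]
  simp only [epsln, Basis.toDualEquiv_apply, Basis.toDual_eq_repr, Pi.basisFun_repr, smul_eq_mul]
  ring

lemma perp_eq (n : ℕ) (U : Submodule ℂ (Fin (n + 1) → ℂ)) :
    perp n U = (U.map (epsln n).toLinearMap).dualCoannihilator := by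
  ext c
  rw [mem_perp, Submodule.mem_dualCoannihilator]
  constructor
  · rintro h f ⟨u, hu, rfl⟩
    rw [LinearEquiv.coe_coe, epsln_apply]
    exact h u hu
  · intro h u hu
    rw [← epsln_apply]
    exact h _ ⟨u, hu, rfl⟩

lemma finrank_perp (n : ℕ) (U : Submodule ℂ (Fin (n + 1) → ℂ)) :
    finrank ℂ (perp n U) + finrank ℂ U = n + 1 := by
  rw [perp_eq]
  have h := Subspace.finrank_add_finrank_dualCoannihilator_eq (U.map (epsln n).toLinearMap)
  rw [LinearEquiv.finrank_map_eq] at h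
  rw [Module.finrank_pi, Fintype.card_fin] at h
  omega

lemma perp_perp (n : ℕ) (U : Submodule ℂ (Fin (n + 1) → ℂ)) : perp n (perp n U) = U := by
  have hle : U ≤ perp n (perp n U) := by
    intro u hu c hc
    rw [Finset.sum_congr rfl fun i _ => mul_comm (c i) (u i)]
    exact hc u hu
  have h1 := finrank_perp n U
  have h2 := finrank_perp n (perp n U)
  exact (Submodule.eq_of_le_of_finrank_le hle (by omega)).symm

lemma pderiv_Lmap (n : ℕ) (c : Fin (n + 1) → ℂ) (k : Fin (n + 1)) :
    pderiv k (Lmap n c) = C (c k) := by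
  rw [Lmap_apply, map_sum, Finset.sum_eq_single k]
  · simp
  · intro b _ hbk
    rw [pderiv_C_mul, pderiv_X_of_ne hbk, mul_zero]
  · simp

lemma contractL_aeval (n : ℕ) (ℓ : Fin (n + 1) → ℂ) (v : Fin (n + 1) → Fin (n + 1) → ℂ)
    (p : MvPolynomial (Fin (n + 1)) ℂ) :
    contractL n ℓ (aeval (fun i => Lmap n (v i)) p)
      = aeval (fun i => Lmap n (v i)) (contractL n (fun j => ∑ k, ℓ k * v j k) p) := by
  rw [contractL_apply, contractL_apply, map_sum]
  simp only [chainRule, pderiv_Lmap, Finset.mul_sum]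
  rw [Finset.sum_comm]
  refine Finset.sum_congr rfl fun j _ => ?_
  rw [map_mul, aeval_C, MvPolynomial.algebraMap_eq, map_sum (C : ℂ →+* _), Finset.sum_mul]
  refine Finset.sum_congr rfl fun i _ => ?_
  rw [C_mul]
  ring

lemma contractL_zero_on_adjoin {n : ℕ} (ℓ : Fin (n + 1) → ℂ)
    {s : Set (MvPolynomial (Fin (n + 1)) ℂ)} (hs : ∀ x ∈ s, contractL n ℓ x = 0)
    {p : MvPolynomial (Fin (n + 1)) ℂ} (hp : p ∈ Algebra.adjoin ℂ s) :
    contractL n ℓ p = 0 := by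
  induction hp using Algebra.adjoin_induction with
  | mem x hx => exact hs x hx
  | algebraMap r => exact contractL_C n ℓ r
  | add x y _ _ hx hy => rw [map_add, hx, hy, add_zero]
  | mul x y _ _ hx hy => rw [contractL_mul, hx, hy, mul_zero, mul_zero, add_zero]

lemma Lmap_single (n : ℕ) (i : Fin (n + 1)) : Lmap n (Pi.single i 1) = X i := by
  rw [Lmap_apply, Finset.sum_eq_single i]
  · simp
  · intro b _ hbi
    rw [Pi.single_eq_of_ne hbi, map_zero, zero_mul]
  · simp

lemma aeval_Lmap (n : ℕ) (v : Fin (n + 1) → Fin (n + 1) → ℂ) (c : Fin (n + 1) → ℂ) :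
    aeval (fun i => Lmap n (v i)) (Lmap n c) = Lmap n (∑ j, c j • v j) := by
  rw [Lmap_apply n c, map_sum, map_sum (Lmap n)]
  refine Finset.sum_congr rfl fun j _ => ?_
  rw [map_mul, aeval_C, aeval_X, MvPolynomial.algebraMap_eq, map_smul, ← smul_eq_C_mul]

lemma sum_mul_repr {n : ℕ} (b' : Basis (Fin (n + 1)) ℂ (Fin (n + 1) → ℂ))
    (x : Fin (n + 1) → ℂ) (k : Fin (n + 1)) :
    ∑ j, x j * (b'.repr (Pi.single j 1)) k = b'.repr x k := by
  have h : (∑ j, (LinearMap.proj j : (Fin (n + 1) → ℂ) →ₗ[ℂ] ℂ).smulRight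
        ((b'.repr (Pi.single j 1)) k))
      = (Finsupp.lapply k).comp (b'.repr : (Fin (n + 1) → ℂ) ≃ₗ[ℂ] _).toLinearMap := by
    refine (Pi.basisFun ℂ (Fin (n + 1))).ext fun m => ?_
    rw [Pi.basisFun_apply, LinearMap.sum_apply, Finset.sum_eq_single m]
    · simp
    · intro b _ hbm
      simp [Pi.single_eq_of_ne hbm]
    · simp
  have hx := DFunLike.congr_fun h x
  rw [LinearMap.sum_apply] at hx
  simpa using hx

lemma mem_adjoin_perp {n : ℕ} (Asub : Submodule ℂ (Fin (n + 1) → ℂ))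
    (ψ : MvPolynomial (Fin (n + 1)) ℂ) (hψ : ∀ a ∈ Asub, contractL n a ψ = 0) :
    ψ ∈ Algebra.adjoin ℂ (Lmap n '' (perp n Asub : Set (Fin (n + 1) → ℂ))) := by
  classical
  set P := perp n Asub with hP
  obtain ⟨Cc, hcompl⟩ := Submodule.exists_isCompl P
  set r := finrank ℂ P with hr
  set r' := finrank ℂ Cc with hr'
  have hcard : r + r' = n + 1 := by
    have := Submodule.finrank_add_eq_of_isCompl hcompl
    rwa [Module.finrank_pi, Fintype.card_fin] at this
  let bP : Basis (Fin r) ℂ P := finBasis ℂ P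
  let bC : Basis (Fin r') ℂ Cc := finBasis ℂ Cc
  let e : (P × Cc) ≃ₗ[ℂ] (Fin (n + 1) → ℂ) := Submodule.prodEquivOfIsCompl P Cc hcompl
  let b : Basis (Fin r ⊕ Fin r') ℂ (Fin (n + 1) → ℂ) := (bP.prod bC).map e
  let κ : (Fin r ⊕ Fin r') ≃ Fin (n + 1) := Fintype.equivOfCardEq (by simp [hcard])
  let b' : Basis (Fin (n + 1)) ℂ (Fin (n + 1) → ℂ) := b.reindex κ
  set v : Fin (n + 1) → Fin (n + 1) → ℂ := fun j => b' j with hv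
  have hgood : ∀ j k, κ.symm j = Sum.inl k → v j ∈ P := by
    intro j k hk
    have : v j = e ((bP.prod bC) (Sum.inl k)) := by
      show b.reindex κ j = _
      rw [Basis.reindex_apply, hk, Basis.map_apply]
    rw [this, Basis.prod_apply]
    simp only [Sum.elim_inl, Function.comp_apply, LinearMap.coe_inl]
    have : e ((bP k : P), (0 : Cc)) = (bP k : Fin (n + 1) → ℂ) := by
      rw [show ⇑e = ⇑(P.subtype.coprod Cc.subtype) from
        congrArg DFunLike.coe (Submodule.coe_prodEquivOfIsCompl P Cc hcompl)]
      simp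
    rw [this]
    exact (bP k).2
  set f : Fin (n + 1) → MvPolynomial (Fin (n + 1)) ℂ := fun i => Lmap n (v i) with hf
  set w : Fin (n + 1) → Fin (n + 1) → ℂ := fun i j => b'.repr (Pi.single i 1) j with hw
  set g : Fin (n + 1) → MvPolynomial (Fin (n + 1)) ℂ := fun i => Lmap n (w i) with hg
  -- aeval f ∘ aeval g = id
  have hfg : (aeval f).comp (aeval g) = AlgHom.id ℂ (MvPolynomial (Fin (n + 1)) ℂ) := by
    apply MvPolynomial.algHom_ext
    intro i
    rw [AlgHom.comp_apply, aeval_X, AlgHom.id_apply, hg]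
    rw [show (aeval f) (Lmap n (w i)) = Lmap n (∑ j, w i j • v j) from aeval_Lmap n v (w i)]
    have : (∑ j, w i j • v j) = (Pi.single i 1 : Fin (n + 1) → ℂ) :=
      Basis.sum_repr b' (Pi.single i 1)
    rw [this, Lmap_single]
  have hgf : (aeval g).comp (aeval f) = AlgHom.id ℂ (MvPolynomial (Fin (n + 1)) ℂ) := by
    apply MvPolynomial.algHom_ext
    intro i
    rw [AlgHom.comp_apply, aeval_X, AlgHom.id_apply, hf]
    rw [show (aeval g) (Lmap n (v i)) = Lmap n (∑ j, v i j • w j) from aeval_Lmap n w (v i)]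
    have hsum : (∑ j, v i j • w j) = (Pi.single i 1 : Fin (n + 1) → ℂ) := by
      funext k
      have h0 : (∑ j, v i j • w j) k = ∑ j, v i j * w j k := by
        rw [Finset.sum_apply]
        exact Finset.sum_congr rfl fun j _ => rfl
      rw [h0]
      have h1 : ∑ j, v i j * w j k = b'.repr (v i) k := sum_mul_repr b' (v i) k
      rw [h1]
      have h2 : b'.repr (v i) = Finsupp.single i 1 := b'.repr_self i
      rw [h2]
      simp [Finsupp.single_apply, Pi.single_apply, eq_comm]
    rw [hsum, Lmap_single]
  have hinj : Function.Injective (aeval f : MvPolynomial (Fin (n + 1)) ℂ →ₐ[ℂ] MvPolynomial (Fin (n + 1)) ℂ) := by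
    intro x y hxy
    have hx := AlgHom.congr_fun hgf x
    have hy := AlgHom.congr_fun hgf y
    simp only [AlgHom.comp_apply, AlgHom.id_apply] at hx hy
    rw [← hx, ← hy, hxy]
  set q : MvPolynomial (Fin (n + 1)) ℂ := aeval g ψ with hq
  have hfq : aeval f q = ψ := by
    have := AlgHom.congr_fun hfg ψ
    rwa [AlgHom.comp_apply, AlgHom.id_apply] at this
  -- the linear map T
  set T : (Fin (n + 1) → ℂ) → (Fin (n + 1) → ℂ) := fun a i => ∑ k, a k * v i k with hT
  have hTzero : ∀ a ∈ Asub, contractL n (T a) q = 0 := by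
    intro a ha
    have h1 : contractL n a (aeval f q) = aeval f (contractL n (T a) q) := contractL_aeval n a v q
    rw [hfq, hψ a ha] at h1
    exact hinj (h1.symm.trans
      (map_zero (aeval f : MvPolynomial (Fin (n + 1)) ℂ →ₐ[ℂ] MvPolynomial (Fin (n + 1)) ℂ)).symm)
  -- span of bad singles
  set u : Fin r' → (Fin (n + 1) → ℂ) := fun k => Pi.single (κ (Sum.inr k)) 1 with hu
  set U : Submodule ℂ (Fin (n + 1) → ℂ) := Submodule.span ℂ (Set.range u) with hU
  have hTmem : ∀ a ∈ Asub, T a ∈ U := by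
    intro a ha
    have hTa : T a = ∑ j, Pi.single j (T a j) := (Finset.univ_sum_single (T a)).symm
    rw [hTa]
    refine Submodule.sum_mem _ fun j _ => ?_
    rcases hsj : κ.symm j with k | k
    · -- good coordinate: T a j = 0
      have hvj : v j ∈ P := hgood j k hsj
      have : T a j = 0 := hvj a ha
      rw [this]
      simp only [Pi.single_zero]
      exact Submodule.zero_mem _
    · have hj : j = κ (Sum.inr k) := by
        rw [← hsj]; simp
      have huk : u k = Pi.single j 1 := by rw [hj]
      have : Pi.single j (T a j) = T a j • u k := by
        rw [huk]
        ext m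
        rcases eq_or_ne m j with rfl | hmj
        · simp
        · simp [Pi.single_eq_of_ne hmj]
      rw [this]
      exact Submodule.smul_mem _ _ (Submodule.subset_span ⟨k, rfl⟩)
  have hTinj : ∀ a ∈ Asub, T a = 0 → a = 0 := by
    intro a _ h0
    have hF : ∀ x : Fin (n + 1) → ℂ, ∑ k, a k * x k = 0 := by
      intro x
      have hbx : ∀ i, ∑ k, a k * b' i k = 0 := by
        intro i
        have := congrFun h0 i
        rw [hT] at this
        exact this
      -- linear functional vanishing on a basis vanishes
      let F : (Fin (n + 1) → ℂ) →ₗ[ℂ] ℂ :=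
        { toFun := fun x => ∑ k, a k * x k
          map_add' := by intro p1 p2; simp [mul_add, Finset.sum_add_distrib]
          map_smul' := by
            intro c p1
            simp only [Pi.smul_apply, smul_eq_mul, RingHom.id_apply]
            rw [Finset.mul_sum]
            exact Finset.sum_congr rfl fun k _ => by ring }
      have : F = 0 := Basis.ext b' fun i => by
        simpa [F] using hbx i
      exact congrFun (congrArg DFunLike.coe this) x
    funext m
    have := hF (Pi.single m 1)
    simp only [Pi.single_apply, mul_ite, mul_one, mul_zero, Finset.sum_ite_eq',
      Finset.mem_univ, if_true] at this
    exact this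
  -- dimension count : T restricted to Asub surjects onto U
  have hfrAsub : finrank ℂ Asub = r' := by
    have := finrank_perp n Asub
    rw [← hP, ← hr] at this
    omega
  have hTlin : ∃ Tl : (Fin (n + 1) → ℂ) →ₗ[ℂ] (Fin (n + 1) → ℂ), ∀ a, Tl a = T a := by
    refine ⟨{ toFun := T
              map_add' := by
                intro p1 p2; funext i; simp [hT, add_mul, Finset.sum_add_distrib]
              map_smul' := by
                intro c p1
                funext i
                simp only [hT, Pi.smul_apply, smul_eq_mul, RingHom.id_apply]
                rw [Finset.mul_sum]
                exact Finset.sum_congr rfl fun k _ => by ring }, fun a => rfl⟩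
  obtain ⟨Tl, hTl⟩ := hTlin
  have hUle : ∀ x ∈ U, ∃ a ∈ Asub, T a = x := by
    have hrange : Submodule.map Tl Asub = U := by
      have hle : Submodule.map Tl Asub ≤ U := by
        rintro x ⟨a, ha, rfl⟩
        rw [hTl]
        exact hTmem a ha
      have hinjT : finrank ℂ (Submodule.map Tl Asub) = r' := by
        have hcomp : Submodule.map Tl Asub = LinearMap.range (Tl.comp Asub.subtype) := by
          rw [LinearMap.range_comp, Submodule.range_subtype]
        have hinj2 : Function.Injective (Tl.comp Asub.subtype) := by
          intro x y hxy
          apply Subtype.ext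
          have hsub : ((x : Fin (n + 1) → ℂ) - y) ∈ Asub := Submodule.sub_mem _ x.2 y.2
          have h0 : T ((x : Fin (n + 1) → ℂ) - y) = 0 := by
            rw [← hTl, map_sub, hTl, hTl]
            rw [LinearMap.comp_apply, LinearMap.comp_apply] at hxy
            rw [← hTl, ← hTl]
            simp only [Submodule.coe_subtype] at hxy
            rw [hxy, sub_self]
          exact sub_eq_zero.mp (hTinj _ hsub h0)
        rw [hcomp, LinearMap.finrank_range_of_inj hinj2, ← hfrAsub]
      have hUfr : finrank ℂ U ≤ r' := by
        rw [hU]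
        have := finrank_span_le_card (R := ℂ) (Set.range u)
        calc finrank ℂ (Submodule.span ℂ (Set.range u)) ≤ (Set.range u).toFinset.card :=
              finrank_span_le_card _
          _ ≤ r' := by
              rw [Set.toFinset_range]
              calc (Finset.image u Finset.univ).card ≤ Finset.univ.card := Finset.card_image_le
                _ = r' := by simp
      exact Submodule.eq_of_le_of_finrank_le hle (by omega)
    intro x hx
    rw [← hrange] at hx
    obtain ⟨a, ha, hax⟩ := hx
    exact ⟨a, ha, by rw [← hTl]; exact hax⟩
  -- partial derivatives of q in bad directions vanish
  have hpd : ∀ k : Fin r', pderiv (κ (Sum.inr k)) q = 0 := by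
    intro k
    obtain ⟨a, ha, hak⟩ := hUle (u k) (Submodule.subset_span ⟨k, rfl⟩)
    have := hTzero a ha
    rw [hak, hu] at this
    rwa [contractL_single] at this
  -- q is supported on good variables
  have hqsupp : q ∈ MvPolynomial.supported ℂ {j : Fin (n + 1) | (κ.symm j).isLeft} := by
    rw [mem_supported]
    intro j hj
    simp only [Set.mem_setOf_eq]
    rcases hsj : κ.symm j with k | k
    · simp
    · exfalso
      have hj' : j = κ (Sum.inr k) := by rw [← hsj]; simp
      have := hpd k
      rw [← hj'] at this
      exact mem_vars_pderiv_ne (by exact_mod_cast hj) this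
  have hqadj : q ∈ Algebra.adjoin ℂ (MvPolynomial.X '' {j : Fin (n + 1) | (κ.symm j).isLeft}) := hqsupp
  -- push through aeval f
  have : ψ ∈ Subalgebra.map (aeval f) (Algebra.adjoin ℂ (MvPolynomial.X '' {j : Fin (n + 1) | (κ.symm j).isLeft})) :=
    ⟨q, hqadj, hfq⟩
  rw [AlgHom.map_adjoin] at this
  refine Algebra.adjoin_mono ?_ this
  rintro x ⟨y, ⟨j, hj, rfl⟩, rfl⟩
  rcases hsj : κ.symm j with k | k
  · exact ⟨v j, hgood j k hsj, by rw [aeval_X]⟩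
  · exfalso
    rw [Set.mem_setOf_eq, hsj] at hj
    simp at hj

lemma contractL_vec_add (n : ℕ) (a b : Fin (n + 1) → ℂ) :
    contractL n (a + b) = contractL n a + contractL n b := by
  simp only [contractL, Pi.add_apply, add_smul, Finset.sum_add_distrib]

lemma contractL_vec_smul (n : ℕ) (c : ℂ) (a : Fin (n + 1) → ℂ) :
    contractL n (c • a) = c • contractL n a := by
  simp only [contractL, Pi.smul_apply, smul_eq_mul, Finset.smul_sum, mul_smul]

noncomputable def coeffsL (n : ℕ) : MvPolynomial (Fin (n + 1)) ℂ →ₗ[ℂ] (Fin (n + 1) → ℂ) :=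
  LinearMap.pi (fun j => lcoeff ℂ (Finsupp.single j 1))

lemma coeffsL_apply (n : ℕ) (p : MvPolynomial (Fin (n + 1)) ℂ) (j : Fin (n + 1)) :
    coeffsL n p j = coeff (Finsupp.single j 1) p := rfl

lemma homog_one_eq_Lmap' {n : ℕ} {p : MvPolynomial (Fin (n + 1)) ℂ} (hp : p.IsHomogeneous 1) :
    p = Lmap n (coeffsL n p) := homog_one_eq_Lmap hp


theorem stmt5 (n s : ℕ) (d : Fin s → ℕ) (hd : ∀ i, 1 ≤ d i)
    (φ : Fin s → MvPolynomial (Fin (n + 1)) ℂ)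
    (hφ : ∀ i, (φ i).IsHomogeneous (d i))
    (W : Submodule ℂ (MvPolynomial (Fin (n + 1)) ℂ))
    (hW : W ≤ homogeneousSubmodule (Fin (n + 1)) ℂ 1) :
    (∀ i, symPowMem n (d i) W (φ i)) ↔ MphiT n s φ ≤ W := by
  constructor
  · -- forward direction
    intro h p hp
    rw [MphiT, Submodule.mem_inf] at hp
    obtain ⟨hp1, hp2⟩ := hp
    have hp1' : p.IsHomogeneous 1 := (mem_homogeneousSubmodule 1 p).mp hp1
    have hker : ∀ ℓ ∈ AphiT n s φ, contractL n ℓ p = 0 := by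
      intro ℓ hℓ
      have := hp2
      rw [Submodule.mem_iInf] at this
      have := this ℓ
      rw [Submodule.mem_iInf] at this
      exact this hℓ
    set W0 : Submodule ℂ (Fin (n + 1) → ℂ) := W.map (coeffsL n) with hW0
    have hA : ∀ ℓ ∈ perp n W0, ℓ ∈ AphiT n s φ := by
      intro ℓ hℓ i
      refine contractL_zero_on_adjoin ℓ (fun x hx => ?_) (h i).1
      have hx1 : x.IsHomogeneous 1 := (mem_homogeneousSubmodule 1 x).mp (hW hx)
      rw [homog_one_eq_Lmap' hx1, contractL_Lmap]
      have h0 : ∑ i, coeffsL n x i * ℓ i = 0 := hℓ (coeffsL n x) ⟨x, hx, rfl⟩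
      rw [show (∑ i, ℓ i * coeffsL n x i) = ∑ i, coeffsL n x i * ℓ i from
        Finset.sum_congr rfl fun i _ => mul_comm _ _, h0, map_zero]
    have hcp : coeffsL n p ∈ perp n (perp n W0) := by
      intro u hu
      have hu' : u ∈ AphiT n s φ := hA u hu
      have h0 := hker u hu'
      rw [homog_one_eq_Lmap' hp1', contractL_Lmap] at h0
      exact C_injective (Fin (n + 1)) ℂ (h0.trans (map_zero (C : ℂ →+* _)).symm)
    rw [perp_perp] at hcp
    obtain ⟨x, hxW, hx⟩ := hcp
    have hx1 : x.IsHomogeneous 1 := (mem_homogeneousSubmodule 1 x).mp (hW hxW)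
    have : x = p := by
      rw [homog_one_eq_Lmap' hx1, homog_one_eq_Lmap' hp1', hx]
    rwa [← this]
  · -- backward direction
    intro hMW i
    refine ⟨?_, hφ i⟩
    set Asub : Submodule ℂ (Fin (n + 1) → ℂ) :=
      { carrier := AphiT n s φ
        add_mem' := by
          intro a b ha hb j
          rw [contractL_vec_add, LinearMap.add_apply, ha j, hb j, add_zero]
        zero_mem' := by
          intro j
          have : (0 : Fin (n + 1) → ℂ) = (0 : ℂ) • (0 : Fin (n + 1) → ℂ) := by simp
          rw [this, contractL_vec_smul, LinearMap.smul_apply, smul_eq_zero]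
          left; rfl
        smul_mem' := by
          intro c a ha j
          rw [contractL_vec_smul, LinearMap.smul_apply, ha j, smul_zero] } with hAsub
    have key := mem_adjoin_perp Asub (φ i) (fun a ha => ha i)
    have himg : Lmap n '' (perp n Asub : Set (Fin (n + 1) → ℂ)) ⊆ (W : Set _) := by
      rintro x ⟨c, hc, rfl⟩
      apply hMW
      rw [MphiT, Submodule.mem_inf]
      refine ⟨Lmap_mem_homog n c, ?_⟩
      rw [Submodule.mem_iInf]
      intro ℓ
      rw [Submodule.mem_iInf]
      intro hℓ
      rw [LinearMap.mem_ker, contractL_Lmap, hc ℓ hℓ, map_zero]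
    exact Algebra.adjoin_mono himg key
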